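/- For every odd integer n > 1, the congruence sum_{k=0}^{(n+1)/2} [4k-1] (q^{-1};q^2)_k^4 / (q^2;q^2)_k^4 · q^{4k} ≡ -(1+3q+q^2)[n]^4 (mod [n]^4 Φ_n(q)) holds, i.e., the difference of the two sides, cleared of denominators, is divisible by [n]^4 Φ_n(q) in ℚ[q]. -/

import Mathlib

open RatFunc

noncomputable def q : RatFunc ℚ := RatFunc.X

/-- q-shifted factorial `(a;b)_m = ∏_{j=0}^{m-1} (1 - a b^j)`. -/
noncomputable def qpoch (a b : RatFunc ℚ) (m : ℕ) : RatFunc ℚ :=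
  ∏ j ∈ Finset.range m, (1 - a * b ^ j)

/-- q-integer `[m] = (1-q^m)/(1-q)` for an arbitrary integer `m`. -/
noncomputable def qintZ (m : ℤ) : RatFunc ℚ := (1 - q ^ m) / (1 - q)

/-- q-integer `[m] = 1 + q + ⋯ + q^{m-1}`. -/
noncomputable def qint (m : ℕ) : RatFunc ℚ := ∑ i ∈ Finset.range m, q ^ i

/-- q-binomial coefficient `(q;q)_n / ((q;q)_k (q;q)_{n-k})`. -/
noncomputable def qbinom (n k : ℕ) : RatFunc ℚ :=
  qpoch q q n / (qpoch q q k * qpoch q q (n - k))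

/-- the polynomial `[n] = 1 + q + ⋯ + q^{n-1}` in `ℚ[q]` -/
noncomputable def qintP (n : ℕ) : Polynomial ℚ := ∑ i ∈ Finset.range n, Polynomial.X ^ i

noncomputable abbrev ph : Polynomial ℚ →+* RatFunc ℚ := algebraMap (Polynomial ℚ) (RatFunc ℚ)

lemma ph_X : ph Polynomial.X = q := RatFunc.algebraMap_X
lemma ph_ne_zero {p : Polynomial ℚ} (h : p ≠ 0) : ph p ≠ 0 := by
  simpa using RatFunc.algebraMap_ne_zero h

lemma hq0 : q ≠ 0 := by
  rw [← ph_X]; exact ph_ne_zero Polynomial.X_ne_zero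

lemma one_sub_q_pow_eq (k : ℕ) : (1 : RatFunc ℚ) - q ^ k = ph (1 - Polynomial.X ^ k) := by
  simp [map_sub, map_pow, ph_X, q]

lemma one_sub_q_pow_ne_zero {k : ℕ} (hk : 0 < k) : (1 : RatFunc ℚ) - q ^ k ≠ 0 := by
  rw [one_sub_q_pow_eq]
  apply ph_ne_zero
  intro h
  have h2 := congrArg (Polynomial.eval 0) h
  simp [zero_pow hk.ne'] at h2

lemma one_sub_q_ne_zero : (1 : RatFunc ℚ) - q ≠ 0 := by
  have := one_sub_q_pow_ne_zero (k := 1) one_pos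
  simpa using this

lemma qint_mul_eq (k : ℕ) : qint k * (1 - q) = 1 - q ^ k := by
  have := geom_sum_mul q k
  unfold qint
  linear_combination -this

lemma qint_eq (k : ℕ) : qint k = (1 - q ^ k) / (1 - q) := by
  rw [← qint_mul_eq, mul_div_assoc, div_self one_sub_q_ne_zero, mul_one]

lemma qpoch_succ (a b : RatFunc ℚ) (m : ℕ) :
    qpoch a b (m+1) = qpoch a b m * (1 - a * b ^ m) := Finset.prod_range_succ _ _

lemma qpoch_inv_succ (k : ℕ) :
    qpoch q⁻¹ (q^2) (k+1) = (1 - q⁻¹) * qpoch q (q^2) k := by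
  unfold qpoch
  rw [Finset.prod_range_succ']
  simp only [pow_zero, mul_one]
  rw [mul_comm]
  congr 1
  apply Finset.prod_congr rfl
  intro j _
  congr 1
  rw [pow_succ', ← mul_assoc, inv_mul_eq_div]
  congr 1
  rw [div_eq_iff hq0]
  ring

lemma qpoch22_ne_zero (M : ℕ) : qpoch (q^2) (q^2) M ≠ 0 := by
  unfold qpoch
  apply Finset.prod_ne_zero_iff.mpr
  intro j _
  have : (1:RatFunc ℚ) - q^2 * (q^2)^j = 1 - q^(2*j+2) := by ring
  rw [this]
  exact one_sub_q_pow_ne_zero (by omega)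

set_option maxHeartbeats 1600000 in
lemma step_identity {F : Type*} [Field F] (qv A B z : F) (hq : qv ≠ 0) (h1 : 1 - qv ≠ 0)
    (hB : B ≠ 0) (h2 : 1 - qv^2*z^2 ≠ 0) :
    -(((1 - z^2*qv)/(1-qv))^2 + qv*((1-z^2)/(1-qv))^2) * A^4 / (B^4*qv)
    + (1 - z^4*qv^3)/(1-qv) * ((1 - qv⁻¹)*A)^4 / (B*(1-qv^2*z^2))^4 * (z^4*qv^4)
    = -(((1 - z^2*qv^3)/(1-qv))^2 + qv*((1 - z^2*qv^2)/(1-qv))^2) * (A*(1 - qv*z^2))^4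
        / ((B*(1-qv^2*z^2))^4*qv) := by
  have n1 : (1-qv)^2 * (B^4*qv) ≠ 0 :=
    mul_ne_zero (pow_ne_zero _ h1) (mul_ne_zero (pow_ne_zero _ hB) hq)
  have n2 : (1-qv) * qv^4 * (B*(1-qv^2*z^2))^4 ≠ 0 :=
    mul_ne_zero (mul_ne_zero h1 (pow_ne_zero _ hq)) (pow_ne_zero _ (mul_ne_zero hB h2))
  have n3 : (1-qv)^2 * ((B*(1-qv^2*z^2))^4*qv) ≠ 0 :=
    mul_ne_zero (pow_ne_zero _ h1) (mul_ne_zero (pow_ne_zero _ (mul_ne_zero hB h2)) hq)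
  have nD : (B*(1-qv^2*z^2))^4 ≠ 0 := pow_ne_zero _ (mul_ne_zero hB h2)
  have nBq : (B^4*qv : F) ≠ 0 := mul_ne_zero (pow_ne_zero _ hB) hq
  have core :
      -((1 - z^2*qv)^2 + qv*(1-z^2)^2) * A^4 / ((1-qv)^2 * (B^4*qv))
      + (1 - z^4*qv^3) * ((1-qv)^4 * A^4) * (z^4*qv^4) / ((1-qv) * qv^4 * (B*(1-qv^2*z^2))^4)
      = -((1 - z^2*qv^3)^2 + qv*(1 - z^2*qv^2)^2) * (A*(1 - qv*z^2))^4
          / ((1-qv)^2 * ((B*(1-qv^2*z^2))^4*qv)) := by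
    rw [div_add_div _ _ n1 n2, div_eq_div_iff (mul_ne_zero n1 n2) n3]
    ring
  have eL1 : -(((1 - z^2*qv)/(1-qv))^2 + qv*((1-z^2)/(1-qv))^2) * A^4 / (B^4*qv)
      = -((1 - z^2*qv)^2 + qv*(1-z^2)^2) * A^4 / ((1-qv)^2 * (B^4*qv)) := by
    rw [div_eq_div_iff nBq n1, div_pow, div_pow]
    field_simp
  have eL2 : (1 - z^4*qv^3)/(1-qv) * ((1 - qv⁻¹)*A)^4 / (B*(1-qv^2*z^2))^4 * (z^4*qv^4)
      = (1 - z^4*qv^3) * ((1-qv)^4 * A^4) * (z^4*qv^4) / ((1-qv) * qv^4 * (B*(1-qv^2*z^2))^4) := by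
    rw [div_mul_eq_mul_div, div_mul_eq_mul_div, div_mul_eq_mul_div, div_div, div_eq_div_iff
      (by exact mul_ne_zero h1 nD) n2]
    have hqi : (1 - qv⁻¹) = (qv - 1)/qv := by
      rw [eq_div_iff hq, sub_mul, inv_mul_cancel₀ hq, one_mul]
    rw [hqi, mul_pow, div_pow]
    field_simp
    ring
  have eR : -(((1 - z^2*qv^3)/(1-qv))^2 + qv*((1 - z^2*qv^2)/(1-qv))^2) * (A*(1 - qv*z^2))^4
        / ((B*(1-qv^2*z^2))^4*qv)
      = -((1 - z^2*qv^3)^2 + qv*(1 - z^2*qv^2)^2) * (A*(1 - qv*z^2))^4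
        / ((1-qv)^2 * ((B*(1-qv^2*z^2))^4*qv)) := by
    rw [div_eq_div_iff (mul_ne_zero nD hq) n3, div_pow, div_pow]
    field_simp
  rw [eL1, eL2, eR]
  exact core

set_option maxHeartbeats 1000000 in
lemma closed_form (M : ℕ) :
    (∑ k ∈ Finset.range (M + 1),
        qintZ (4 * k - 1) * qpoch q⁻¹ (q ^ 2) k ^ 4 / qpoch (q ^ 2) (q ^ 2) k ^ 4 *
          q ^ (4 * k))
    = -(qint (2*M+1)^2 + q * qint (2*M)^2) * qpoch q (q^2) M ^ 4
        / (qpoch (q^2) (q^2) M ^ 4 * q) := by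
  induction M with
  | zero =>
    rw [Finset.sum_range_one]
    have h1 : (4 * ((0:ℕ):ℤ) - 1) = (-1 : ℤ) := by norm_num
    rw [h1]
    unfold qintZ qpoch qint
    simp only [Finset.prod_range_zero, Finset.sum_range_one, Finset.sum_range_zero, pow_zero,
      one_pow, mul_one, div_one, zpow_neg_one, mul_zero, zero_mul]
    rw [div_eq_div_iff one_sub_q_ne_zero (by simpa using hq0)]
    have h0 := hq0
    field_simp
    simp only [zero_add, Finset.sum_range_one, pow_zero, one_pow]
    ring
  | succ M ih =>
    rw [Finset.sum_range_succ, ih]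
    have hcast : (4 * ((M+1:ℕ):ℤ) - 1) = ((4*M+3 : ℕ):ℤ) := by push_cast; ring
    rw [hcast]
    unfold qintZ
    rw [zpow_natCast]
    rw [qpoch_inv_succ, qpoch_succ (q^2) (q^2) M, qpoch_succ q (q^2) M]
    have e1 : 2*(M+1)+1 = 2*M+3 := by ring
    have e2 : 2*(M+1) = 2*M+2 := by ring
    rw [e1, e2, qint_eq (2*M+3), qint_eq (2*M+2), qint_eq (2*M+1), qint_eq (2*M)]
    have hB := qpoch22_ne_zero M
    set A := qpoch q (q^2) M with hAdef
    set B := qpoch (q^2) (q^2) M with hBdef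
    set z := q^M with hzdef
    have E3 : q^(4*M+3) = z^4*q^3 := by rw [hzdef, show 4*M+3 = M*4+3 by ring, pow_add, pow_mul]
    have E4 : q^(4*(M+1)) = z^4*q^4 := by rw [hzdef, show 4*(M+1) = M*4+4 by ring, pow_add, pow_mul]
    have E5 : q^(2*M+3) = z^2*q^3 := by rw [hzdef, show 2*M+3 = M*2+3 by ring, pow_add, pow_mul]
    have E6 : q^(2*M+2) = z^2*q^2 := by rw [hzdef, show 2*M+2 = M*2+2 by ring, pow_add, pow_mul]
    have E7 : q^(2*M+1) = z^2*q := by rw [hzdef, show 2*M+1 = M*2+1 by ring, pow_add, pow_mul, pow_one]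
    have E8 : q^(2*M) = z^2 := by rw [hzdef, show 2*M = M*2 by ring, pow_mul]
    have E9 : (q^2)^M = z^2 := by rw [hzdef, ← pow_mul, ← pow_mul, mul_comm]
    rw [E3, E4, E5, E6, E7, E8, E9]
    have h2 : (1:RatFunc ℚ) - q^2 * z^2 ≠ 0 := by
      have : (1:RatFunc ℚ) - q^2*z^2 = 1 - q^(2*M+2) := by rw [E6]; ring
      rw [this]; exact one_sub_q_pow_ne_zero (by omega)
    exact step_identity q A B z hq0 one_sub_q_ne_zero hB h2

open Polynomial in
lemma coprime_of_no_common_root (p r : Polynomial ℚ) (hp : p ≠ 0)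
    (h : ∀ z : ℂ, aeval z p = 0 → aeval z r ≠ 0) : IsCoprime p r := by
  classical
  rw [← EuclideanDomain.gcd_isUnit_iff]
  by_contra hu
  set g := EuclideanDomain.gcd p r with hg
  have hg0 : g ≠ 0 := by
    intro h0
    rw [hg] at h0
    exact hp (EuclideanDomain.gcd_eq_zero_iff.mp h0).1
  have hdeg : g.degree ≠ 0 := fun hd => hu (Polynomial.isUnit_iff_degree_eq_zero.mpr hd)
  have hdegpos : 0 < (g.map (algebraMap ℚ ℂ)).degree := by
    rw [Polynomial.degree_map]
    rcases Polynomial.degree_eq_natDegree hg0 with hh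
    rw [hh]
    exact_mod_cast Nat.pos_of_ne_zero (fun h0 => hdeg (by rw [hh, h0]; rfl))
  obtain ⟨z, hz⟩ := Complex.exists_root hdegpos
  have hroot : ∀ s : Polynomial ℚ, g ∣ s → aeval z s = 0 := by
    intro s hs
    rw [aeval_def, ← eval_map]
    exact Polynomial.IsRoot.dvd hz (Polynomial.map_dvd _ hs)
  exact h z (hroot p (EuclideanDomain.gcd_dvd_left p r)) (hroot r (EuclideanDomain.gcd_dvd_right p r))

noncomputable def geomP (g k : ℕ) : Polynomial ℚ := ∑ t ∈ Finset.range k, Polynomial.X ^ (g * t)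

lemma geomP_mul (g k : ℕ) : (1 - (Polynomial.X:Polynomial ℚ)^g) * geomP g k = 1 - Polynomial.X^(g*k) := by
  have h := geom_sum_mul ((Polynomial.X:Polynomial ℚ)^g) k
  simp only [← pow_mul] at h
  unfold geomP
  linear_combination -h

lemma geomP_ne_zero {g k : ℕ} (hk : 0 < k) : geomP g k ≠ 0 := by
  intro h0
  have h1 := congrArg (Polynomial.eval 0) h0
  simp only [geomP, Polynomial.eval_finset_sum, Polynomial.eval_pow, Polynomial.eval_X,
    Polynomial.eval_zero] at h1
  rcases Nat.eq_zero_or_pos g with hg | hg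
  · simp [hg] at h1
    omega
  · rw [Finset.sum_eq_single 0 (fun b _ hb => by
        rw [zero_pow (Nat.mul_ne_zero hg.ne' hb)])
        (fun hh => absurd (Finset.mem_range.mpr hk) hh)] at h1
    simp at h1

lemma aeval_geomP (z : ℂ) (g k : ℕ) :
    Polynomial.aeval z (geomP g k) = ∑ t ∈ Finset.range k, (z^g)^t := by
  simp [geomP, pow_mul]

lemma cyclo_coprime_one_sub_pow {n g : ℕ} (hn : 0 < n) (hg : 0 < g) (hng : ¬ n ∣ g) :
    IsCoprime (Polynomial.cyclotomic n ℚ) (1 - (Polynomial.X:Polynomial ℚ)^g) := by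
  apply coprime_of_no_common_root _ _ (Polynomial.cyclotomic_ne_zero n ℚ)
  intro z hz h2
  haveI : NeZero (n : ℂ) := ⟨Nat.cast_ne_zero.mpr hn.ne'⟩
  have hprim : IsPrimitiveRoot z n := by
    rw [← Polynomial.isRoot_cyclotomic_iff (R := ℂ)]
    have h3 : Polynomial.aeval z (Polynomial.cyclotomic n ℚ) = (Polynomial.cyclotomic n ℂ).eval z := by
      rw [Polynomial.aeval_def, ← Polynomial.eval_map, Polynomial.map_cyclotomic]
    rwa [Polynomial.IsRoot.def, ← h3]
  have h4 : Polynomial.aeval z (1 - (Polynomial.X:Polynomial ℚ)^g) = 1 - z^g := by simp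
  rw [h4] at h2
  exact hng (hprim.dvd_of_pow_eq_one g (sub_eq_zero.mp h2).symm)

lemma dvd_prod_sub_prod {R : Type*} [CommRing R] (c : R) (s : Finset ℕ) (f h : ℕ → R)
    (H : ∀ i ∈ s, c ∣ f i - h i) : c ∣ (∏ i ∈ s, f i) - (∏ i ∈ s, h i) := by
  classical
  induction s using Finset.induction_on with
  | empty => simp
  | @insert a s ha ih =>
    rw [Finset.prod_insert ha, Finset.prod_insert ha]
    have h1 := H a (Finset.mem_insert_self a s)
    have h2 := ih (fun i hi => H i (Finset.mem_insert_of_mem hi))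
    have e : f a * ∏ i ∈ s, f i - h a * ∏ i ∈ s, h i
        = f a * ((∏ i ∈ s, f i) - ∏ i ∈ s, h i) + (f a - h a) * ∏ i ∈ s, h i := by ring
    rw [e]
    exact dvd_add (h2.mul_left _) (h1.mul_right _)

noncomputable def aPoly (n i : ℕ) : Polynomial ℚ := geomP (Nat.gcd i n) (i / Nat.gcd i n)
noncomputable def bPoly (n i : ℕ) : Polynomial ℚ := geomP (Nat.gcd i n) ((n - i) / Nat.gcd i n)

lemma aPoly_mul {n i : ℕ} (hi : 0 < i) :
    (1 - (Polynomial.X:Polynomial ℚ)^(Nat.gcd i n)) * aPoly n i = 1 - Polynomial.X^i := by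
  unfold aPoly
  rw [geomP_mul, Nat.mul_div_cancel' (Nat.gcd_dvd_left i n)]

lemma bPoly_mul {n i : ℕ} :
    (1 - (Polynomial.X:Polynomial ℚ)^(Nat.gcd i n)) * bPoly n i = 1 - Polynomial.X^(n-i) := by
  unfold bPoly
  rw [geomP_mul, Nat.mul_div_cancel' (Nat.dvd_sub (Nat.gcd_dvd_right i n) (Nat.gcd_dvd_left i n))]

lemma cyclo_dvd_pair {n i : ℕ} (hn1 : 1 < n) (hi : 0 < i) (hin : i < n) :
    Polynomial.cyclotomic n ℚ ∣ bPoly n i + Polynomial.X^(n-i) * aPoly n i := by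
  have hg : 0 < Nat.gcd i n := Nat.gcd_pos_of_pos_left n hi
  have hng : ¬ n ∣ Nat.gcd i n := fun h =>
    absurd (Nat.le_of_dvd hg h) (by have := Nat.gcd_le_left (m := i) n hi; omega)
  have hxx : (Polynomial.X:Polynomial ℚ)^(n-i) * Polynomial.X^i = Polynomial.X^n := by
    rw [← pow_add, Nat.sub_add_cancel hin.le]
  have key : (1 - (Polynomial.X:Polynomial ℚ)^(Nat.gcd i n)) * (bPoly n i + Polynomial.X^(n-i) * aPoly n i)
      = 1 - Polynomial.X^n := by
    have h1 := aPoly_mul (n := n) hi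
    have h2 := bPoly_mul (n := n) (i := i)
    linear_combination h2 + Polynomial.X^(n-i) * h1 - hxx
  have hc1 : Polynomial.cyclotomic n ℚ ∣ 1 - (Polynomial.X:Polynomial ℚ)^n := by
    have := Polynomial.cyclotomic.dvd_X_pow_sub_one n ℚ
    have e : (1:Polynomial ℚ) - Polynomial.X^n = -(Polynomial.X^n - 1) := by ring
    rw [e]
    exact this.neg_right
  rw [← key] at hc1
  exact (cyclo_coprime_one_sub_pow (by omega) hg hng).dvd_of_dvd_mul_left hc1

set_option maxHeartbeats 1000000 in
lemma cyclo_dvd_K {n : ℕ} (hn1 : 1 < n) :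
    Polynomial.cyclotomic n ℚ ∣
      (1 + 3*Polynomial.X + Polynomial.X^2) * Polynomial.X^(n*n) * (qintP (n+1))^4
        - ((qintP (n+2))^2 + Polynomial.X*(qintP (n+1))^2) := by
  classical
  set c := Polynomial.cyclotomic n ℚ with hc
  -- bivariate polynomial in Y over ℚ[X]
  set Y : Polynomial (Polynomial ℚ) := Polynomial.X with hY
  set W2 : Polynomial (Polynomial ℚ) :=
    Polynomial.C (1+3*Polynomial.X+Polynomial.X^2) * Y^n * (Polynomial.C (Polynomial.X-1) + Polynomial.C Polynomial.X * (Y - 1))^4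
    - Polynomial.C ((Polynomial.X-1)^2) * (Polynomial.C (Polynomial.X^2-1) + Polynomial.C (Polynomial.X^2) * (Y - 1))^2
    - Polynomial.C (Polynomial.X*(Polynomial.X-1)^2) * (Polynomial.C (Polynomial.X-1) + Polynomial.C Polynomial.X * (Y - 1))^2
    with hW2
  have hev : W2.eval 1 = 0 := by
    rw [hW2]
    simp only [hY, Polynomial.eval_sub, Polynomial.eval_mul, Polynomial.eval_add,
      Polynomial.eval_pow, Polynomial.eval_C, Polynomial.eval_X, Polynomial.eval_one]
    ring
  have hdvd2 : (Y - Polynomial.C 1) ∣ W2 := by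
    have h := Polynomial.X_sub_C_dvd_sub_C_eval (a := (1:Polynomial ℚ)) (p := W2)
    rwa [hev, map_zero, sub_zero] at h
  have h3 := map_dvd (Polynomial.aeval ((Polynomial.X:Polynomial ℚ)^n)) hdvd2
  rw [hW2] at h3
  simp only [hY, map_sub, map_mul, map_pow, map_add, Polynomial.aeval_X,
    Polynomial.aeval_C, map_one, Algebra.algebraMap_self, RingHom.id_apply] at h3
  -- h3 : X^n - 1 ∣ big
  have hb : ((Polynomial.X-1) + Polynomial.X*((Polynomial.X:Polynomial ℚ)^n - 1))
      = qintP (n+1) * (Polynomial.X-1) := by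
    have h := geom_sum_mul (Polynomial.X:Polynomial ℚ) (n+1)
    rw [pow_succ] at h
    unfold qintP
    linear_combination -h
  have hb2 : ((Polynomial.X^2-1) + Polynomial.X^2*((Polynomial.X:Polynomial ℚ)^n - 1))
      = qintP (n+2) * (Polynomial.X-1) := by
    have h := geom_sum_mul (Polynomial.X:Polynomial ℚ) (n+2)
    rw [show n+2 = n+1+1 by ring, pow_succ, pow_succ] at h
    unfold qintP
    linear_combination -h
  rw [hb, hb2] at h3
  have h5 : (1+3*Polynomial.X+Polynomial.X^2) * ((Polynomial.X:Polynomial ℚ)^n)^n * (qintP (n+1) * (Polynomial.X-1))^4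
      - (Polynomial.X-1)^2 * (qintP (n+2) * (Polynomial.X-1))^2
      - Polynomial.X*(Polynomial.X-1)^2 * (qintP (n+1) * (Polynomial.X-1))^2
      = (Polynomial.X-1)^4 *
        ((1 + 3*Polynomial.X + Polynomial.X^2) * Polynomial.X^(n*n) * (qintP (n+1))^4
          - ((qintP (n+2))^2 + Polynomial.X*(qintP (n+1))^2)) := by
    rw [← pow_mul]
    ring
  rw [h5] at h3
  have hcx : c ∣ (Polynomial.X:Polynomial ℚ)^n - 1 := Polynomial.cyclotomic.dvd_X_pow_sub_one n ℚ
  have h6 := dvd_trans hcx h3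
  have hcop : IsCoprime c ((Polynomial.X:Polynomial ℚ)-1) := by
    have h7 := cyclo_coprime_one_sub_pow (n := n) (g := 1) (by omega) one_pos
      (fun h => by have := Nat.le_of_dvd one_pos h; omega)
    have e : ((Polynomial.X:Polynomial ℚ)-1) = -(1 - Polynomial.X^1) := by ring
    rw [e]
    exact h7.neg_right
  exact (hcop.pow_right).dvd_of_dvd_mul_left h6

noncomputable def PaP (n : ℕ) : Polynomial ℚ := ∏ j ∈ Finset.range ((n+1)/2 - 1), aPoly n (2*j+1)
noncomputable def PbP (n : ℕ) : Polynomial ℚ := ∏ j ∈ Finset.range ((n+1)/2 - 1), bPoly n (2*j+1)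
noncomputable def EP (n : ℕ) : Polynomial ℚ :=
  (1+3*Polynomial.X+Polynomial.X^2)*Polynomial.X*(qintP (n+1))^4*(PbP n)^4
  - ((qintP (n+2))^2 + Polynomial.X*(qintP (n+1))^2)*(PaP n)^4

lemma cyclo_dvd_EP {n : ℕ} (hn : Odd n) (hn1 : 1 < n) :
    Polynomial.cyclotomic n ℚ ∣ EP n := by
  classical
  set c := Polynomial.cyclotomic n ℚ with hc
  set m := (n+1)/2 with hmdef
  have hm : 2*m = n+1 := by obtain ⟨k, hk⟩ := hn; omega
  have hm2 : 2 ≤ m := by omega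
  set s := ∑ j ∈ Finset.range (m-1), (n - (2*j+1)) with hsdef
  have hs : 4*s+1 = n*n := by
    have h1 : ∑ j ∈ Finset.range (m-1), (n-(2*j+1)) = ∑ j ∈ Finset.range (m-1), 2*(j+1) := by
      rw [← Finset.sum_range_reflect (fun j => 2*(j+1)) (m-1)]
      apply Finset.sum_congr rfl
      intro j hj
      have := Finset.mem_range.mp hj
      omega
    have h2 : (∑ i ∈ Finset.range (m-1), i) * 2 = (m-1) * (m-1-1) := Finset.sum_range_id_mul_two (m-1)
    have h3 : ∑ j ∈ Finset.range (m-1), 2*(j+1) = 2*(∑ i ∈ Finset.range (m-1), i) + 2*(m-1) := by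
      have e : ∀ j ∈ Finset.range (m-1), 2*(j+1) = 2*j+2 := fun j _ => by ring
      rw [Finset.sum_congr rfl e, Finset.sum_add_distrib, Finset.sum_const, Finset.card_range,
        ← Finset.mul_sum, smul_eq_mul]
      ring
    rw [hsdef, h1, h3]
    zify [show 1 ≤ m by omega, show 1 ≤ m - 1 by omega]
    have hmn : (n : ℤ) = 2*(m:ℤ) - 1 := by omega
    have h2' : ((∑ i ∈ Finset.range (m-1), (i:ℤ))) * 2 = ((m:ℤ)-1) * ((m:ℤ)-2) := by
      zify [show 1 ≤ m by omega, show 1 ≤ m - 1 by omega] at h2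
      linarith
    rw [hmn]
    linear_combination 4 * h2'
  have hpair : ∀ j ∈ Finset.range (m-1),
      c ∣ bPoly n (2*j+1) - (-(Polynomial.X^(n-(2*j+1)) * aPoly n (2*j+1))) := by
    intro j hj
    have hj' := Finset.mem_range.mp hj
    have h := cyclo_dvd_pair (n := n) (i := 2*j+1) hn1 (by omega) (by omega)
    rw [sub_neg_eq_add]
    exact h
  have hPb := dvd_prod_sub_prod c (Finset.range (m-1)) _ _ hpair
  have hprod : (∏ j ∈ Finset.range (m-1), (-(Polynomial.X^(n-(2*j+1)) * aPoly n (2*j+1))))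
      = (-1:Polynomial ℚ)^(m-1) * Polynomial.X^s * PaP n := by
    have e1 : ∀ j, (-((Polynomial.X:Polynomial ℚ)^(n-(2*j+1)) * aPoly n (2*j+1)))
        = (-1) * (Polynomial.X^(n-(2*j+1)) * aPoly n (2*j+1)) := fun j => by ring
    simp only [e1]
    rw [Finset.prod_mul_distrib, Finset.prod_const, Finset.card_range,
      Finset.prod_mul_distrib, Finset.prod_pow_eq_pow_sum]
    rw [PaP, ← hmdef, ← hsdef, mul_assoc]
  rw [hprod] at hPb
  have hsgn : (((-1:Polynomial ℚ)^(m-1) * Polynomial.X^s * PaP n))^4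
      = Polynomial.X^(4*s) * (PaP n)^4 := by
    have hsg : ((-1 : Polynomial ℚ)^(m-1))^4 = 1 := by
      rw [← pow_mul, mul_comm, pow_mul]
      norm_num
    rw [mul_pow, mul_pow, hsg, one_mul, ← pow_mul, mul_comm s 4]
  have h8 : c ∣ (PbP n)^4 - Polynomial.X^(4*s) * (PaP n)^4 := by
    rw [← hsgn]
    have hfold : PbP n = ∏ j ∈ Finset.range (m-1), bPoly n (2*j+1) := by rw [PbP, ← hmdef]
    rw [← hfold] at hPb
    exact dvd_trans hPb (sub_dvd_pow_sub_pow _ _ 4)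
  have hK := cyclo_dvd_K (n := n) hn1
  have hxp : (Polynomial.X:Polynomial ℚ)^(n*n) = Polynomial.X^(4*s)*Polynomial.X := by
    rw [← hs, pow_succ]
  have hE : EP n = ((1 + 3*Polynomial.X + Polynomial.X^2) * Polynomial.X^(n*n) * (qintP (n+1))^4
        - ((qintP (n+2))^2 + Polynomial.X*(qintP (n+1))^2)) * (PaP n)^4
      + (1+3*Polynomial.X+Polynomial.X^2)*Polynomial.X*(qintP (n+1))^4
        * ((PbP n)^4 - Polynomial.X^(4*s) * (PaP n)^4) := by
    rw [EP]
    linear_combination (-((1+3*Polynomial.X+Polynomial.X^2)*(qintP (n+1))^4*(PaP n)^4)) * hxp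
  rw [hE]
  exact dvd_add (hK.mul_right _) (h8.mul_left _)

lemma qintP_aeval_one (k : ℕ) : Polynomial.aeval (1:ℂ) (qintP k) = (k : ℂ) := by
  simp [qintP]

lemma qintP_ne_zero {k : ℕ} (hk : 0 < k) : qintP k ≠ 0 := by
  intro h0
  have := congrArg (Polynomial.aeval (1:ℂ)) h0
  rw [qintP_aeval_one, map_zero] at this
  exact_mod_cast absurd this (Nat.cast_ne_zero.mpr hk.ne')

lemma bPoly_ne_zero {n i : ℕ} (hi : i < n) : bPoly n i ≠ 0 := by
  apply geomP_ne_zero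
  apply Nat.div_pos (Nat.le_of_dvd (by omega)
    (Nat.dvd_sub (Nat.gcd_dvd_right i n) (Nat.gcd_dvd_left i n)))
  exact Nat.gcd_pos_of_pos_right i (by omega)

lemma qintP_aeval_geom (k : ℕ) (z : ℂ) :
    Polynomial.aeval z (qintP k) * (z - 1) = z^k - 1 := by
  have h := geom_sum_mul z k
  simp only [qintP, map_sum, map_pow, Polynomial.aeval_X]
  exact h

noncomputable def DP (n : ℕ) : Polynomial ℚ := Polynomial.X * (qintP (n+1))^4 * (PbP n)^4

lemma DP_coprime {n : ℕ} (hn : Odd n) (hn1 : 1 < n) :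
    IsCoprime (DP n) (qintP n * Polynomial.cyclotomic n ℚ) := by
  classical
  set m := (n+1)/2 with hmdef
  have hm : 2*m = n+1 := by obtain ⟨k, hk⟩ := hn; omega
  have hDne : DP n ≠ 0 := by
    apply mul_ne_zero (mul_ne_zero Polynomial.X_ne_zero
      (pow_ne_zero _ (qintP_ne_zero (by omega))))
    apply pow_ne_zero
    rw [PbP]
    apply Finset.prod_ne_zero_iff.mpr
    intro j hj
    have := Finset.mem_range.mp hj
    exact bPoly_ne_zero (by omega)
  apply coprime_of_no_common_root _ _ hDne
  intro z hD0 hP0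
  -- from hP0 : common root of qintP n * cyclotomic n
  have hzn : z^n = 1 ∧ z ≠ 1 := by
    have hP0' : Polynomial.aeval z (qintP n) * Polynomial.aeval z (Polynomial.cyclotomic n ℚ) = 0 := by
      rw [← map_mul]; exact hP0
    rcases mul_eq_zero.mp hP0' with h | h
    · have h1 := qintP_aeval_geom n z
      rw [h, zero_mul] at h1
      constructor
      · linear_combination -h1
      · intro hz1
        rw [hz1, qintP_aeval_one] at h
        exact absurd h (by exact_mod_cast Nat.cast_ne_zero.mpr (by omega : n ≠ 0))
    · haveI : NeZero (n : ℂ) := ⟨Nat.cast_ne_zero.mpr (by omega : n ≠ 0)⟩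
      have hprim : IsPrimitiveRoot z n := by
        rw [← Polynomial.isRoot_cyclotomic_iff (R := ℂ)]
        have h3 : Polynomial.aeval z (Polynomial.cyclotomic n ℚ)
            = (Polynomial.cyclotomic n ℂ).eval z := by
          rw [Polynomial.aeval_def, ← Polynomial.eval_map, Polynomial.map_cyclotomic]
        rwa [Polynomial.IsRoot.def, ← h3]
      refine ⟨hprim.pow_eq_one, fun hz1 => ?_⟩
      have := hprim.dvd_of_pow_eq_one 1 (by rw [hz1, one_pow])
      have := Nat.le_of_dvd one_pos this
      omega
  obtain ⟨hz1, hzne⟩ := hzn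
  have hz0 : z ≠ 0 := by
    intro h0
    rw [h0, zero_pow (by omega : n ≠ 0)] at hz1
    exact zero_ne_one hz1
  have hDexp : Polynomial.aeval z (DP n) = z * (Polynomial.aeval z (qintP (n+1)))^4
      * (∏ j ∈ Finset.range (m-1), Polynomial.aeval z (bPoly n (2*j+1)))^4 := by
    rw [DP, PbP, ← hmdef]
    simp [map_mul, map_pow]
  rw [hDexp] at hD0
  have hu0 : Polynomial.aeval z (qintP (n+1)) = 1 := by
    have h1 := qintP_aeval_geom (n+1) z
    have h2 : z^(n+1) = z := by rw [pow_succ, hz1, one_mul]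
    rw [h2] at h1
    have h3 : (Polynomial.aeval z (qintP (n+1)) - 1) * (z - 1) = 0 := by linear_combination h1
    rcases mul_eq_zero.mp h3 with h4 | h4
    · exact sub_eq_zero.mp h4
    · exact absurd (sub_eq_zero.mp h4) hzne
  rcases mul_eq_zero.mp hD0 with h5 | h5
  · rcases mul_eq_zero.mp h5 with h6 | h6
    · exact hz0 h6
    · rw [hu0, one_pow] at h6
      exact one_ne_zero h6
  · have h6 := pow_eq_zero_iff (n := 4) (by norm_num) |>.mp h5
    obtain ⟨j, hj, hbj⟩ := Finset.prod_eq_zero_iff.mp h6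
    have hjlt := Finset.mem_range.mp hj
    have hilt : 2*j+1 < n := by omega
    set i := 2*j+1 with hidef
    set g := Nat.gcd i n with hgdef
    have hb := bPoly_mul (n := n) (i := i)
    have hbz : (1 - z^g) * Polynomial.aeval z (bPoly n i) = 1 - z^(n-i) := by
      have h7 := congrArg (Polynomial.aeval z) hb
      simpa using h7
    rw [hbj, mul_zero] at hbz
    have hzni : z^(n-i) = 1 := by linear_combination hbz
    have hd1 : orderOf z ∣ n - i := orderOf_dvd_of_pow_eq_one hzni
    have hd2 : orderOf z ∣ n := orderOf_dvd_of_pow_eq_one hz1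
    have hgg : Nat.gcd (n-i) n = g := Nat.dvd_antisymm
      (Nat.dvd_gcd (by
        have h₁ := Nat.gcd_dvd_left (n-i) n
        have h₂ := Nat.gcd_dvd_right (n-i) n
        have h₃ := Nat.dvd_sub h₂ h₁
        rwa [Nat.sub_sub_self hilt.le] at h₃) (Nat.gcd_dvd_right _ _))
      (Nat.dvd_gcd (Nat.dvd_sub (Nat.gcd_dvd_right i n) (Nat.gcd_dvd_left i n))
        (Nat.gcd_dvd_right i n))
    have hzg : z^g = 1 := orderOf_dvd_iff_pow_eq_one.mp (hgg ▸ Nat.dvd_gcd hd1 hd2)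
    have hkpos : 0 < (n-i) / g := Nat.div_pos
      (Nat.le_of_dvd (by omega) (Nat.dvd_sub (Nat.gcd_dvd_right i n) (Nat.gcd_dvd_left i n)))
      (Nat.gcd_pos_of_pos_right i (by omega))
    have hval : Polynomial.aeval z (bPoly n i) = (((n-i)/g : ℕ) : ℂ) := by
      rw [bPoly, aeval_geomP, ← hgdef, hzg]
      simp
    rw [hbj] at hval
    exact absurd hval.symm (Nat.cast_ne_zero.mpr hkpos.ne')

lemma qint_eq_ph (k : ℕ) : qint k = ph (qintP k) := by
  simp [qint, qintP, map_sum, map_pow, ph_X, q]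

noncomputable def GPp (n : ℕ) : Polynomial ℚ :=
  ∏ j ∈ Finset.range ((n+1)/2 - 1), (1 - Polynomial.X^(Nat.gcd (2*j+1) n))

lemma GPp_ne_zero (n : ℕ) : ph (GPp n) ≠ 0 := by
  apply ph_ne_zero
  rw [GPp]
  apply Finset.prod_ne_zero_iff.mpr
  intro j _
  intro h0
  have h1 := congrArg (Polynomial.eval 0) h0
  have hg : 0 < Nat.gcd (2*j+1) n := Nat.gcd_pos_of_pos_left n (by omega)
  simp [zero_pow hg.ne'] at h1

lemma PbP_ph_ne_zero {n : ℕ} (hn : Odd n) (hn1 : 1 < n) : ph (PbP n) ≠ 0 := by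
  apply ph_ne_zero
  rw [PbP]
  apply Finset.prod_ne_zero_iff.mpr
  intro j hj
  have hj' := Finset.mem_range.mp hj
  have hm : 2*((n+1)/2) = n+1 := by obtain ⟨k, hk⟩ := hn; omega
  exact bPoly_ne_zero (by omega)

lemma hA_decomp {n : ℕ} (hn : Odd n) (hn1 : 1 < n) :
    qpoch q (q^2) ((n+1)/2) = ph (GPp n) * ph (PaP n) * (1 - q^n) := by
  set m := (n+1)/2 with hmdef
  have hm : 2*m = n+1 := by obtain ⟨k, hk⟩ := hn; omega
  have hm2 : 2 ≤ m := by omega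
  have hstep : ∀ j, (1:RatFunc ℚ) - q * (q^2)^j = 1 - q^(2*j+1) := by
    intro j
    have hp : q * (q^2)^j = q^(2*j+1) := by rw [← pow_mul, ← pow_succ']
    rw [hp]
  unfold qpoch
  have hm1 : m = (m-1) + 1 := by omega
  rw [hm1, Finset.prod_range_succ]
  have hlast : (1:RatFunc ℚ) - q * (q^2)^(m-1) = 1 - q^n := by
    rw [hstep, show 2*(m-1)+1 = n by omega]
  rw [hlast]
  congr 1
  have hfac : ∀ j ∈ Finset.range (m-1), (1:RatFunc ℚ) - q * (q^2)^j
      = ph (1 - Polynomial.X^(Nat.gcd (2*j+1) n)) * ph (aPoly n (2*j+1)) := by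
    intro j hj
    rw [hstep, ← map_mul, aPoly_mul (by omega : 0 < 2*j+1), one_sub_q_pow_eq]
  rw [Finset.prod_congr rfl hfac, Finset.prod_mul_distrib, ← map_prod, ← map_prod]
  rw [GPp, PaP, ← hmdef]

lemma hB_decomp {n : ℕ} (hn : Odd n) (hn1 : 1 < n) :
    qpoch (q^2) (q^2) ((n+1)/2) = ph (GPp n) * ph (PbP n) * (1 - q^(n+1)) := by
  set m := (n+1)/2 with hmdef
  have hm : 2*m = n+1 := by obtain ⟨k, hk⟩ := hn; omega
  have hm2 : 2 ≤ m := by omega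
  have hstep : ∀ j, (1:RatFunc ℚ) - q^2 * (q^2)^j = 1 - q^(2*j+2) := by
    intro j
    have hp : q^2 * (q^2)^j = q^(2*j+2) := by
      rw [← pow_mul, ← pow_add, show 2+2*j = 2*j+2 by omega]
    rw [hp]
  unfold qpoch
  have hm1 : m = (m-1) + 1 := by omega
  rw [hm1, Finset.prod_range_succ]
  have hlast : (1:RatFunc ℚ) - q^2 * (q^2)^(m-1) = 1 - q^(n+1) := by
    rw [hstep, show 2*(m-1)+2 = n+1 by omega]
  rw [hlast]
  congr 1
  rw [Finset.prod_congr rfl (fun j _ => hstep j)]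
  have hre := Finset.prod_range_reflect (fun j => (1:RatFunc ℚ) - q^(2*j+2)) (m-1)
  rw [← hre]
  have hfac : ∀ j ∈ Finset.range (m-1), (1:RatFunc ℚ) - q^(2*((m-1)-1-j)+2)
      = ph (1 - Polynomial.X^(Nat.gcd (2*j+1) n)) * ph (bPoly n (2*j+1)) := by
    intro j hj
    have hj' := Finset.mem_range.mp hj
    rw [show 2*((m-1)-1-j)+2 = n - (2*j+1) by omega]
    rw [← map_mul, bPoly_mul, one_sub_q_pow_eq]
  rw [Finset.prod_congr rfl hfac, Finset.prod_mul_distrib, ← map_prod, ← map_prod]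
  rw [GPp, PbP, ← hmdef]

lemma assembly_identity {F : Type*} [Field F] (qv G A' B' u0 u1 Pn : F)
    (hq : qv ≠ 0) (h1 : 1 - qv ≠ 0) (hG : G ≠ 0) (hB : B' ≠ 0) (hu0 : u0 ≠ 0) :
    -(u1^2 + qv*u0^2) * (G * A' * (Pn * (1-qv)))^4 / ((G * B' * (u0 * (1-qv)))^4 * qv)
    - (-(1+3*qv+qv^2) * Pn^4)
    = Pn^4 * ((1+3*qv+qv^2) * qv * u0^4 * B'^4 - (u1^2 + qv*u0^2) * A'^4)
        / (qv * u0^4 * B'^4) := by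
  have d1 : ((G * B' * (u0 * (1-qv)))^4 * qv : F) ≠ 0 :=
    mul_ne_zero (pow_ne_zero _ (mul_ne_zero (mul_ne_zero hG hB) (mul_ne_zero hu0 h1))) hq
  have d2 : (qv * u0^4 * B'^4 : F) ≠ 0 :=
    mul_ne_zero (mul_ne_zero hq (pow_ne_zero _ hu0)) (pow_ne_zero _ hB)
  rw [sub_eq_iff_eq_add, div_add' _ _ _ d2, div_eq_div_iff d1 d2]
  ring

set_option maxHeartbeats 1000000 in
theorem supercongruence_half (n : ℕ) (hn : Odd n) (hn1 : 1 < n) :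
    ∃ N D : Polynomial ℚ,
      IsCoprime D (qintP n * Polynomial.cyclotomic n ℚ) ∧
      algebraMap (Polynomial ℚ) (RatFunc ℚ) D *
          ((∑ k ∈ Finset.range ((n + 1) / 2 + 1),
              qintZ (4 * k - 1) * qpoch q⁻¹ (q ^ 2) k ^ 4 / qpoch (q ^ 2) (q ^ 2) k ^ 4 *
                q ^ (4 * k))
            - (-(1 + 3 * q + q ^ 2) * qint n ^ 4))
        = algebraMap (Polynomial ℚ) (RatFunc ℚ) N ∧
      qintP n ^ 4 * Polynomial.cyclotomic n ℚ ∣ N := by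
  have hm : 2*((n+1)/2) = n+1 := by obtain ⟨k, hk⟩ := hn; omega
  have hDne : ph (DP n) ≠ 0 := by
    apply ph_ne_zero
    apply mul_ne_zero (mul_ne_zero Polynomial.X_ne_zero
      (pow_ne_zero _ (qintP_ne_zero (by omega))))
    apply pow_ne_zero
    rw [PbP]
    apply Finset.prod_ne_zero_iff.mpr
    intro j hj
    have := Finset.mem_range.mp hj
    exact bPoly_ne_zero (by omega)
  refine ⟨qintP n ^ 4 * EP n, DP n, DP_coprime hn hn1, ?_,
    mul_dvd_mul_left _ (cyclo_dvd_EP hn hn1)⟩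
  have hmain : (∑ k ∈ Finset.range ((n + 1) / 2 + 1),
        qintZ (4 * k - 1) * qpoch q⁻¹ (q ^ 2) k ^ 4 / qpoch (q ^ 2) (q ^ 2) k ^ 4 *
          q ^ (4 * k))
      - (-(1 + 3 * q + q ^ 2) * qint n ^ 4)
      = ph (qintP n ^ 4 * EP n) / ph (DP n) := by
    rw [closed_form]
    rw [show 2*((n+1)/2)+1 = n+2 by omega, show 2*((n+1)/2) = n+1 by omega]
    rw [hA_decomp hn hn1, hB_decomp hn hn1]
    have e1 : (1:RatFunc ℚ) - q^n = ph (qintP n) * (1-q) := by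
      rw [← qint_mul_eq, qint_eq_ph]
    have e2 : (1:RatFunc ℚ) - q^(n+1) = ph (qintP (n+1)) * (1-q) := by
      rw [← qint_mul_eq, qint_eq_ph]
    rw [e1, e2, qint_eq_ph (n+2), qint_eq_ph (n+1), qint_eq_ph n]
    simp only [EP, DP, map_sub, map_add, map_mul, map_pow, ph_X, map_one, map_ofNat]
    exact assembly_identity q (ph (GPp n)) (ph (PaP n)) (ph (PbP n)) (ph (qintP (n+1)))
      (ph (qintP (n+2))) (ph (qintP n)) hq0 one_sub_q_ne_zero (GPp_ne_zero n)
      (PbP_ph_ne_zero hn hn1) (ph_ne_zero (qintP_ne_zero (by omega)))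
  rw [hmain, mul_comm, div_mul_cancel₀ _ hDne]
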